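/- For vectors x, y in R^n, x is weakly majorized by y from above (i.e., for every k, the sum of the k smallest entries of x is at least the sum of the k smallest entries of y) if and only if there exists a vector z in R^n with x_i ≥ z_i for all i and z majorized by y (i.e., partial sums of z in decreasing order are bounded by those of y, with equal total sums). -/
import Mathlib

/-- Sum of the `k` smallest entries of `x`: the minimum of `∑ i ∈ s, x i`
over subsets `s` of cardinality `k`. -/
noncomputable def smallSum {n : ℕ} (x : Fin n → ℝ) (k : ℕ) : ℝ :=
  sInf ((fun s : Finset (Fin n) => ∑ i ∈ s, x i) '' {s | s.card = k})

/-- Sum of the `k` largest entries of `x`. -/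
noncomputable def largeSum {n : ℕ} (x : Fin n → ℝ) (k : ℕ) : ℝ :=
  sSup ((fun s : Finset (Fin n) => ∑ i ∈ s, x i) '' {s | s.card = k})

/-- `x` is majorized by `y` (`x ≼ y`). -/
def Majorized {n : ℕ} (x y : Fin n → ℝ) : Prop :=
  (∀ k, k ≤ n → largeSum x k ≤ largeSum y k) ∧ ∑ i, x i = ∑ i, y i

/-- `x ≼^w y`: weak majorization from above. -/
def WeakMajAbove {n : ℕ} (x y : Fin n → ℝ) : Prop :=
  ∀ k, 1 ≤ k → k ≤ n → smallSum y k ≤ smallSum x k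

/-- `x ≺^w y`: strict weak majorization from above. -/
def StrictWeakMajAbove {n : ℕ} (x y : Fin n → ℝ) : Prop :=
  ∀ k, 1 ≤ k → k ≤ n → smallSum y k < smallSum x k

namespace WMaux

variable {n : ℕ}

lemma img_finite (x : Fin n → ℝ) (k : ℕ) :
    ((fun s : Finset (Fin n) => ∑ i ∈ s, x i) '' {s | s.card = k}).Finite :=
  Set.Finite.image _ (Set.toFinite _)

lemma img_nonempty (x : Fin n → ℝ) {k : ℕ} (hk : k ≤ n) :
    ((fun s : Finset (Fin n) => ∑ i ∈ s, x i) '' {s | s.card = k}).Nonempty := by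
  obtain ⟨t, -, ht⟩ := Finset.exists_subset_card_eq
    (s := (Finset.univ : Finset (Fin n))) (n := k) (by simpa using hk)
  exact ⟨_, ⟨t, ht, rfl⟩⟩

lemma smallSum_le (x : Fin n → ℝ) {k : ℕ} {s : Finset (Fin n)} (h : s.card = k) :
    smallSum x k ≤ ∑ i ∈ s, x i :=
  csInf_le ((img_finite x k).bddBelow) ⟨s, h, rfl⟩

lemma le_largeSum (x : Fin n → ℝ) {k : ℕ} {s : Finset (Fin n)} (h : s.card = k) :
    ∑ i ∈ s, x i ≤ largeSum x k :=
  le_csSup ((img_finite x k).bddAbove) ⟨s, h, rfl⟩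

lemma exists_smallSum (x : Fin n → ℝ) {k : ℕ} (hk : k ≤ n) :
    ∃ s : Finset (Fin n), s.card = k ∧ smallSum x k = ∑ i ∈ s, x i := by
  obtain ⟨s, hs, h⟩ := (img_nonempty x hk).csInf_mem (img_finite x k)
  exact ⟨s, hs, h.symm⟩

lemma exists_largeSum (x : Fin n → ℝ) {k : ℕ} (hk : k ≤ n) :
    ∃ s : Finset (Fin n), s.card = k ∧ largeSum x k = ∑ i ∈ s, x i := by
  obtain ⟨s, hs, h⟩ := (img_nonempty x hk).csSup_mem (img_finite x k)
  exact ⟨s, hs, h.symm⟩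

lemma smallSum_zero (x : Fin n → ℝ) : smallSum x 0 = 0 := by
  have h : {s : Finset (Fin n) | s.card = 0} = {∅} := by
    ext s; simp [Finset.card_eq_zero]
  simp [smallSum, h]

lemma largeSum_zero (x : Fin n → ℝ) : largeSum x 0 = 0 := by
  have h : {s : Finset (Fin n) | s.card = 0} = {∅} := by
    ext s; simp [Finset.card_eq_zero]
  simp [largeSum, h]

lemma setOf_card_n : {s : Finset (Fin n) | s.card = n} = {Finset.univ} := by
  ext s
  simp only [Set.mem_setOf_eq, Set.mem_singleton_iff]
  constructor
  · intro h; exact Finset.eq_univ_of_card s (by rw [h, Fintype.card_fin])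
  · rintro rfl; simp

lemma smallSum_n (x : Fin n → ℝ) : smallSum x n = ∑ i, x i := by
  simp [smallSum, setOf_card_n]

lemma largeSum_add_smallSum (x : Fin n → ℝ) {k : ℕ} (hk : k ≤ n) :
    largeSum x k + smallSum x (n - k) = ∑ i, x i := by
  apply le_antisymm
  · obtain ⟨s, hs, he⟩ := exists_largeSum x hk
    have hc : sᶜ.card = n - k := by
      rw [Finset.card_compl, hs, Fintype.card_fin]
    have := smallSum_le x hc
    have hsum := Finset.sum_add_sum_compl s x
    rw [he]; linarith
  · obtain ⟨t, ht, he⟩ := exists_smallSum x (Nat.sub_le n k)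
    have hc : tᶜ.card = k := by
      rw [Finset.card_compl, ht, Fintype.card_fin]; omega
    have := le_largeSum x hc
    have hsum := Finset.sum_add_sum_compl t x
    rw [he]; linarith

lemma smallSum_comp_perm (x : Fin n → ℝ) (σ : Equiv.Perm (Fin n)) (k : ℕ) :
    smallSum (x ∘ σ) k = smallSum x k := by
  unfold smallSum
  congr 1
  ext r
  simp only [Set.mem_image, Set.mem_setOf_eq]
  constructor
  · rintro ⟨s, hs, rfl⟩
    refine ⟨s.map σ.toEmbedding, by simp [hs], ?_⟩
    rw [Finset.sum_map]
    rfl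
  · rintro ⟨s, hs, rfl⟩
    refine ⟨s.map σ.symm.toEmbedding, by simp [hs], ?_⟩
    rw [Finset.sum_map]
    simp

/-- the initial segment of `Fin n` of length `k` -/
def initF (n k : ℕ) : Finset (Fin n) :=
  Finset.univ.filter (fun i : Fin n => (i : ℕ) < k)

lemma mem_initF {k : ℕ} {i : Fin n} : i ∈ initF n k ↔ (i : ℕ) < k := by
  simp [initF]

lemma initF_card {k : ℕ} (hk : k ≤ n) : (initF n k).card = k := by
  have he : initF n k = (Finset.range k).attachFin
      (fun m hm => lt_of_lt_of_le (Finset.mem_range.mp hm) hk) := by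
    ext a; simp [initF, Finset.mem_attachFin]
  rw [he, Finset.card_attachFin, Finset.card_range]

lemma initF_subset {k l : ℕ} (h : k ≤ l) : initF n k ⊆ initF n l := by
  intro a ha
  rw [mem_initF] at *
  omega

lemma strictMono_val_le {k : ℕ} {f : Fin k → Fin n} (hf : StrictMono f) :
    ∀ i : Fin k, (i : ℕ) ≤ (f i : ℕ) := by
  have H : ∀ m : ℕ, ∀ i : Fin k, (i : ℕ) = m → m ≤ (f i : ℕ) := by
    intro m
    induction m with
    | zero => intro i _; exact Nat.zero_le _
    | succ p ih =>
      intro i hi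
      have hp : p < k := by omega
      have hji : (⟨p, hp⟩ : Fin k) < i := by rw [Fin.lt_def, Fin.val_mk]; omega
      have h1 := hf hji
      have h2 := ih ⟨p, hp⟩ rfl
      rw [Fin.lt_def] at h1
      omega
  exact fun i => H (i : ℕ) i rfl

/-- sum over an initial segment of a monotone function is minimal -/
lemma sum_initF_le {g : Fin n → ℝ} (hg : Monotone g) {k : ℕ} (hk : k ≤ n)
    {s : Finset (Fin n)} (hs : s.card = k) :
    ∑ i ∈ initF n k, g i ≤ ∑ i ∈ s, g i := by
  classical
  have hmem : ∀ j : Fin k, s.orderEmbOfFin hs j ∈ s := fun j =>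
    Finset.orderEmbOfFin_mem s hs j
  have himg : Finset.image (s.orderEmbOfFin hs) Finset.univ = s := by
    apply Finset.eq_of_subset_of_card_le
    · intro a ha
      simp only [Finset.mem_image] at ha
      obtain ⟨j, -, rfl⟩ := ha; exact hmem j
    · rw [hs, Finset.card_image_of_injective _ (s.orderEmbOfFin hs).injective,
        Finset.card_univ, Fintype.card_fin]
  have hsum : ∑ i ∈ s, g i = ∑ j : Fin k, g (s.orderEmbOfFin hs j) := by
    conv_lhs => rw [← himg]
    rw [Finset.sum_image]
    intro a _ b _ hab
    exact (s.orderEmbOfFin hs).injective hab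
  have himg2 : Finset.image (fun j : Fin k => (Fin.castLE hk j : Fin n)) Finset.univ
      = initF n k := by
    ext a
    simp only [Finset.mem_image, mem_initF]
    constructor
    · rintro ⟨j, -, rfl⟩; exact j.2
    · intro ha; exact ⟨⟨(a : ℕ), ha⟩, Finset.mem_univ _, by ext; simp⟩
  have hsum2 : ∑ i ∈ initF n k, g i = ∑ j : Fin k, g (Fin.castLE hk j) := by
    conv_lhs => rw [← himg2]
    rw [Finset.sum_image]
    intro a _ b _ hab
    have := congrArg Fin.val hab
    simpa [Fin.ext_iff] using this
  rw [hsum, hsum2]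
  apply Finset.sum_le_sum
  intro j _
  apply hg
  have h1 : (j : ℕ) ≤ ((s.orderEmbOfFin hs j) : ℕ) :=
    strictMono_val_le (s.orderEmbOfFin hs).strictMono j
  simpa [Fin.le_def] using h1

lemma smallSum_monotone {g : Fin n → ℝ} (hg : Monotone g) {k : ℕ} (hk : k ≤ n) :
    smallSum g k = ∑ i ∈ initF n k, g i := by
  apply le_antisymm (smallSum_le g (initF_card hk))
  obtain ⟨s, hs, he⟩ := exists_smallSum g hk
  rw [he]
  exact sum_initF_le hg hk hs

/-- lower sets of Fin n are initial segments -/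
lemma lowerSet_eq_init {F : Finset (Fin n)}
    (hF : ∀ i j : Fin n, j ≤ i → i ∈ F → j ∈ F) (i : Fin n) :
    i ∈ F ↔ (i : ℕ) < F.card := by
  constructor
  · intro hi
    have hsub : Finset.Iic i ⊆ F := fun j hj => hF i j (Finset.mem_Iic.mp hj) hi
    have := Finset.card_le_card hsub
    rw [Fin.card_Iic i] at this
    omega
  · intro hi
    by_contra hni
    have hsub : F ⊆ Finset.Iio i := by
      intro j hj
      rw [Finset.mem_Iio]
      by_contra hji
      exact hni (hF j i (le_of_not_gt hji) hj)
    have := Finset.card_le_card hsub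
    rw [Fin.card_Iio i] at this
    omega

end WMaux

open WMaux in
/-- `x` is weakly majorized from above by `y` iff there exists `z` with `z i ≤ x i` for all `i` and `z` majorized by `y`. -/
theorem weakMajAbove_iff_exists_le {n : ℕ} (x y : Fin n → ℝ) :
    WeakMajAbove x y ↔ ∃ z : Fin n → ℝ, (∀ i, z i ≤ x i) ∧ Majorized z y := by
  constructor
  · intro hw
    rcases Nat.eq_zero_or_pos n with hn | hn
    · subst hn
      refine ⟨x, fun i => le_refl _, ?_, by simp⟩
      intro k hk
      interval_cases k
      rw [largeSum_zero, largeSum_zero]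
    -- n ≥ 1 : construct z by clipping x at a threshold t
    have hne : (Finset.univ : Finset (Fin n)).Nonempty := ⟨⟨0, hn⟩, Finset.mem_univ _⟩
    have hyx : ∑ i, y i ≤ ∑ i, x i := by
      have := hw n hn (le_refl n)
      rwa [smallSum_n, smallSum_n] at this
    -- find t with ∑ min (x i) t = ∑ y
    obtain ⟨t, ht⟩ : ∃ t : ℝ, ∑ i, min (x i) t = ∑ i, y i := by
      set f : ℝ → ℝ := fun t => ∑ i, min (x i) t with hf
      have hcont : Continuous f := by
        apply continuous_finset_sum
        intro i _
        exact continuous_const.min continuous_id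
      set a : ℝ := min (Finset.univ.inf' hne x) ((∑ i, y i) / n) with ha
      set b : ℝ := Finset.univ.sup' hne x with hb
      have hab : a ≤ b := by
        refine le_trans (min_le_left _ _) ?_
        obtain ⟨i0, _⟩ := hne
        exact le_trans (Finset.inf'_le x (Finset.mem_univ i0))
          (Finset.le_sup' x (Finset.mem_univ i0))
      have hfa : f a ≤ ∑ i, y i := by
        have h1 : f a = n * a := by
          have hmin : ∀ i : Fin n, min (x i) a = a := fun i =>
            min_eq_right (le_trans (min_le_left _ _) (Finset.inf'_le x (Finset.mem_univ i)))
          calc f a = ∑ _i : Fin n, a := Finset.sum_congr rfl (fun i _ => hmin i)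
            _ = n * a := by
                rw [Finset.sum_const, Finset.card_univ, Fintype.card_fin, nsmul_eq_mul]
        have h2 : a ≤ (∑ i, y i) / n := min_le_right _ _
        rw [h1]
        have hn' : (0:ℝ) < n := by positivity
        calc (n:ℝ) * a ≤ n * ((∑ i, y i) / n) := by
              exact mul_le_mul_of_nonneg_left h2 (le_of_lt hn')
          _ = ∑ i, y i := by field_simp
      have hfb : ∑ i, y i ≤ f b := by
        have h1 : f b = ∑ i, x i := by
          exact Finset.sum_congr rfl (fun i _ => min_eq_left
            (Finset.le_sup' x (Finset.mem_univ i)))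
        rw [h1]; exact hyx
      have := intermediate_value_Icc hab hcont.continuousOn
      obtain ⟨t, -, htt⟩ := this ⟨hfa, hfb⟩
      exact ⟨t, htt⟩
    set z : Fin n → ℝ := fun i => min (x i) t with hz
    refine ⟨z, fun i => min_le_left _ _, ?_, ht⟩
    -- sorted versions
    set σ : Equiv.Perm (Fin n) := Tuple.sort x with hσ
    set g : Fin n → ℝ := x ∘ σ with hg
    have hgm : Monotone g := Tuple.monotone_sort x
    have hzm : Monotone (z ∘ σ) := by
      have : (z ∘ σ) = fun i => min (g i) t := rfl
      rw [this]
      exact hgm.min monotone_const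
    set σy : Equiv.Perm (Fin n) := Tuple.sort y with hσy
    set gy : Fin n → ℝ := y ∘ σy with hgy
    have hgym : Monotone gy := Tuple.monotone_sort y
    have hSy : ∀ k ≤ n, smallSum y k = ∑ i ∈ initF n k, gy i := fun k hk => by
      rw [← smallSum_comp_perm y σy k, smallSum_monotone hgym hk]
    have hSx : ∀ k ≤ n, smallSum x k = ∑ i ∈ initF n k, g i := fun k hk => by
      rw [← smallSum_comp_perm x σ k, smallSum_monotone hgm hk]
    have hSz : ∀ k ≤ n, smallSum z k = ∑ i ∈ initF n k, min (g i) t := fun k hk => by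
      rw [← smallSum_comp_perm z σ k, smallSum_monotone hzm hk]
      rfl
    -- the threshold index r
    set r : ℕ := (Finset.univ.filter (fun i : Fin n => g i < t)).card with hrdef
    have hr : ∀ i : Fin n, g i < t ↔ (i : ℕ) < r := by
      intro i
      have := lowerSet_eq_init
        (F := Finset.univ.filter (fun i : Fin n => g i < t)) ?_ i
      · simpa using this
      · intro i j hji hi
        simp only [Finset.mem_filter, Finset.mem_univ, true_and] at hi ⊢
        exact lt_of_le_of_lt (hgm hji) hi
    have hrn : r ≤ n := by
      rw [hrdef]
      exact le_trans (Finset.card_filter_le _ _) (by simp)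
    -- smallSum of z below r
    have hzlow : ∀ j ≤ r, smallSum z j = smallSum x j := by
      intro j hj
      rw [hSz j (le_trans hj hrn), hSx j (le_trans hj hrn)]
      apply Finset.sum_congr rfl
      intro i hi
      rw [mem_initF] at hi
      exact min_eq_left (le_of_lt ((hr i).mpr (by omega)))
    -- smallSum of z above r
    have hzhigh : ∀ j, r ≤ j → j ≤ n →
        smallSum z j = smallSum x r + ((j : ℝ) - r) * t := by
      intro j hrj hj
      rw [hSz j hj, hSx r hrn]
      have hsplit : ∀ i ∈ initF n j, min (g i) t
          = if (i : ℕ) < r then g i else t := by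
        intro i _
        by_cases hir : (i : ℕ) < r
        · rw [if_pos hir]; exact min_eq_left (le_of_lt ((hr i).mpr hir))
        · rw [if_neg hir]
          exact min_eq_right (le_of_not_gt (fun hlt => hir ((hr i).mp hlt)))
      rw [Finset.sum_congr rfl hsplit, Finset.sum_ite]
      have h1 : (initF n j).filter (fun i : Fin n => (i : ℕ) < r) = initF n r := by
        ext a
        simp only [Finset.mem_filter, mem_initF]
        omega
      have h2 : ((initF n j).filter (fun i : Fin n => ¬ (i : ℕ) < r)).card = j - r := by
        have := Finset.card_filter_add_card_filter_not
          (s := initF n j) (p := fun i : Fin n => (i : ℕ) < r)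
        rw [h1] at this
        rw [initF_card hj, initF_card (le_trans hrj hj)] at this
        omega
      rw [h1, Finset.sum_const, h2, nsmul_eq_mul]
      congr 1
      rw [Nat.cast_sub hrj]
    -- total sum identity
    have htot : smallSum x r + ((n : ℝ) - r) * t = ∑ i, y i := by
      rw [← ht, ← smallSum_n z]
      exact (hzhigh n hrn (le_refl n)).symm
    -- key: smallSum y j ≤ smallSum z j for all j ≤ n
    have hkey : ∀ j ≤ n, smallSum y j ≤ smallSum z j := by
      intro j hj
      rcases le_or_gt j r with hjr | hjr
      · rw [hzlow j hjr]
        rcases Nat.eq_zero_or_pos j with h0 | h0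
        · subst h0; rw [smallSum_zero, smallSum_zero]
        · exact hw j h0 hj
      · -- r < j ≤ n
        rcases eq_or_lt_of_le hj with hjn | hjn
        · subst hjn
          rw [hzhigh j hrn (le_refl j), htot, ← smallSum_n y]
        · -- r < j < n
          rw [hzhigh j (le_of_lt hjr) hj]
          have har : smallSum y r ≤ smallSum x r := by
            rcases Nat.eq_zero_or_pos r with h0 | h0
            · rw [h0, smallSum_zero, smallSum_zero]
            · exact hw r h0 hrn
          -- convexity inequality for y
          have hconv : ((n : ℝ) - j) * (smallSum y j - smallSum y r)
              ≤ ((j : ℝ) - r) * (smallSum y n - smallSum y j) := by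
            rw [hSy j hj, hSy r hrn, hSy n (le_refl n)]
            have hsub1 : initF n r ⊆ initF n j := initF_subset (le_of_lt hjr)
            have hsub2 : initF n j ⊆ initF n n := initF_subset hj
            have e1 : ∑ i ∈ initF n j, gy i
                = ∑ i ∈ initF n j \ initF n r, gy i + ∑ i ∈ initF n r, gy i :=
              (Finset.sum_sdiff hsub1).symm
            have e2 : ∑ i ∈ initF n n, gy i
                = ∑ i ∈ initF n n \ initF n j, gy i + ∑ i ∈ initF n j, gy i :=
              (Finset.sum_sdiff hsub2).symm
            set c : ℝ := gy ⟨j, hjn⟩ with hc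
            have hcard1 : (initF n j \ initF n r).card = j - r := by
              rw [Finset.card_sdiff_of_subset hsub1, initF_card hj, initF_card hrn]
            have hcard2 : (initF n n \ initF n j).card = n - j := by
              rw [Finset.card_sdiff_of_subset hsub2, initF_card (le_refl n), initF_card hj]
            have hb1 : ∑ i ∈ initF n j \ initF n r, gy i ≤ ((j : ℝ) - r) * c := by
              have := Finset.sum_le_card_nsmul (initF n j \ initF n r) gy c ?_
              · rw [hcard1, nsmul_eq_mul, Nat.cast_sub (le_of_lt hjr)] at this
                exact this
              · intro i hi
                rw [Finset.mem_sdiff, mem_initF, mem_initF] at hi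
                exact hgym (by rw [Fin.le_def]; exact le_of_lt hi.1)
            have hb2 : ((n : ℝ) - j) * c ≤ ∑ i ∈ initF n n \ initF n j, gy i := by
              have := Finset.card_nsmul_le_sum (initF n n \ initF n j) gy c ?_
              · rw [hcard2, nsmul_eq_mul, Nat.cast_sub hj] at this
                exact this
              · intro i hi
                rw [Finset.mem_sdiff, mem_initF, mem_initF] at hi
                exact hgym (by rw [Fin.le_def]; simpa using le_of_not_gt hi.2)
            have hp : (0:ℝ) ≤ (j : ℝ) - r := by
              have : (r:ℝ) ≤ j := by exact_mod_cast le_of_lt hjr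
              linarith
            have hq : (0:ℝ) ≤ (n : ℝ) - j := by
              have : (j:ℝ) ≤ n := by exact_mod_cast hj
              linarith
            rw [e1, e2]
            nlinarith [mul_le_mul_of_nonneg_left hb1 hq,
              mul_le_mul_of_nonneg_left hb2 hp]
          have hyn : smallSum y n = ∑ i, y i := smallSum_n y
          have hp : (0:ℝ) < (j : ℝ) - r := by
            have : (r:ℝ) < j := by exact_mod_cast hjr
            linarith
          have hq : (0:ℝ) < (n : ℝ) - j := by
            have : (j:ℝ) < n := by exact_mod_cast hjn
            linarith
          nlinarith [hconv, har, htot]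
    intro k hk
    have h1 := largeSum_add_smallSum z hk
    have h2 := largeSum_add_smallSum y hk
    have h3 := hkey (n - k) (Nat.sub_le n k)
    rw [ht] at h1
    linarith
  · rintro ⟨z, hzx, ⟨hmaj, hsum⟩⟩
    intro k hk1 hkn
    have h1 := largeSum_add_smallSum y (Nat.sub_le n k)
    have h2 := largeSum_add_smallSum z (Nat.sub_le n k)
    have h3 : n - (n - k) = k := by omega
    rw [h3] at h1 h2
    have h4 : largeSum z (n - k) ≤ largeSum y (n - k) := hmaj _ (Nat.sub_le n k)
    have h5 : smallSum z k ≤ smallSum x k := by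
      obtain ⟨s, hs, he⟩ := exists_smallSum x hkn
      calc smallSum z k ≤ ∑ i ∈ s, z i := smallSum_le z hs
        _ ≤ ∑ i ∈ s, x i := Finset.sum_le_sum (fun i _ => hzx i)
        _ = smallSum x k := he.symm
    linarith
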